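/- An orientation-preserving homeomorphism f of ℝ² that is topologically conjugate to the translation T(x) = x + e₁ does not have the topological shadowing property. -/

import Mathlib

open Metric Filter Topology

/-- `n`-fold composition of a homeomorphism, `n : ℕ`. -/
def hpow {X : Type*} [TopologicalSpace X] (f : X ≃ₜ X) : ℕ → X ≃ₜ X
  | 0 => Homeomorph.refl X
  | n + 1 => (hpow f n).trans f

/-- `n`-th iterate of a homeomorphism, `n : ℤ` (negative powers use the inverse). -/
def hzpow {X : Type*} [TopologicalSpace X] (f : X ≃ₜ X) : ℤ → X ≃ₜ X
  | Int.ofNat n => hpow f n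
  | Int.negSucc n => (hpow f (n + 1)).symm

/-- `(xₙ)ₙ∈ℤ` is a `δ`-pseudo-orbit for `f`: `d(f(xₙ), xₙ₊₁) < δ(f(xₙ))` for all `n`. -/
def IsPseudoOrbit {X : Type*} [MetricSpace X] (f : X → X) (δ : X → ℝ) (x : ℤ → X) : Prop :=
  ∀ n : ℤ, dist (f (x n)) (x (n + 1)) < δ (f (x n))

/-- Topological shadowing property (strict shadowing inequality). -/
def TSP {X : Type*} [MetricSpace X] (f : X ≃ₜ X) : Prop :=
  ∀ ε : X → ℝ, Continuous ε → (∀ p, 0 < ε p) →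
    ∃ δ : X → ℝ, Continuous δ ∧ (∀ p, 0 < δ p) ∧
      ∀ x : ℤ → X, IsPseudoOrbit f δ x →
        ∃ y : X, ∀ n : ℤ, dist (hzpow f n y) (x n) < ε (x n)

/-- `f` is orientation preserving: it is isotopic to the identity (an equivalent
characterization of orientation preservation for homeomorphisms of the plane). -/
def OrientationPreserving (f : ℂ ≃ₜ ℂ) : Prop :=
  ∃ H : ℝ → ℂ → ℂ, Continuous (fun p : ℝ × ℂ => H p.1 p.2) ∧
    (∀ t : ℝ, IsHomeomorph (H t)) ∧ H 0 = f ∧ H 1 = id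

/-- Modulus of continuity lemma. -/
lemma exists_modulus (h : ℂ ≃ₜ ℂ) (r : ℂ → ℝ) (hrc : Continuous r) (hrpos : ∀ p, 0 < r p) :
    ∃ ε : ℂ → ℝ, Continuous ε ∧ (∀ p, 0 < ε p) ∧
      ∀ p q : ℂ, dist q p < ε p → dist (h q) (h p) < r p := by
  set t : ℂ → Set ℝ := fun p => {c | 0 < c ∧ ∀ q, dist q p < c → dist (h q) (h p) < r p} with ht_def
  have hconv : ∀ p, Convex ℝ (t p) := by
    intro p
    rw [convex_iff_ordConnected]
    constructor
    intro c1 h1 c2 h2 c hc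
    exact ⟨lt_of_lt_of_le h1.1 hc.1, fun q hq => h2.2 q (lt_of_lt_of_le hq hc.2)⟩
  have Hloc : ∀ p : ℂ, ∃ c : ℝ, ∀ᶠ y in 𝓝 p, c ∈ t y := by
    intro p
    have hρ : 0 < r p / 2 := by linarith [hrpos p]
    have hK : IsCompact (Metric.closedBall p 2) := isCompact_closedBall p 2
    have huc : UniformContinuousOn h (Metric.closedBall p 2) :=
      hK.uniformContinuousOn_of_continuous h.continuous.continuousOn
    obtain ⟨c, hcpos, hc⟩ := (Metric.uniformContinuousOn_iff).mp huc (r p / 2) hρ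
    have hUopen : IsOpen (Metric.ball p 1 ∩ {y | r p / 2 < r y}) :=
      Metric.isOpen_ball.inter (isOpen_lt continuous_const hrc)
    have hpU : p ∈ Metric.ball p 1 ∩ {y | r p / 2 < r y} :=
      ⟨Metric.mem_ball_self one_pos, by simpa using hρ⟩
    refine ⟨min c 1, eventually_of_mem (hUopen.mem_nhds hpU) ?_⟩
    rintro y ⟨hy1, hy2⟩
    refine ⟨lt_min hcpos one_pos, fun q hq => ?_⟩
    have hyK : y ∈ Metric.closedBall p 2 := by
      have := Metric.mem_ball.mp hy1
      exact Metric.mem_closedBall.mpr (by linarith [this])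
    have hqK : q ∈ Metric.closedBall p 2 := by
      have h1 := Metric.mem_ball.mp hy1
      have h2 : dist q y < 1 := lt_of_lt_of_le hq (min_le_right _ _)
      have := dist_triangle q y p
      exact Metric.mem_closedBall.mpr (by linarith)
    have := hc q hqK y hyK (lt_of_lt_of_le hq (min_le_left _ _))
    calc dist (h q) (h y) < r p / 2 := this
      _ < r y := hy2
  obtain ⟨g, hg⟩ := exists_continuous_forall_mem_convex_of_local_const hconv Hloc
  exact ⟨g, g.continuous, fun p => (hg p).1, fun p q hq => (hg p).2 q hq⟩

lemma hpow_conj (f h : ℂ ≃ₜ ℂ) (hconj : ∀ z : ℂ, h (f z) = h z + 1) (n : ℕ) (y : ℂ) :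
    h (hpow f n y) = h y + n := by
  induction n with
  | zero => simp [hpow]
  | succ k ih =>
    have : hpow f (k + 1) y = f (hpow f k y) := rfl
    rw [this, hconj, ih]
    push_cast; ring

lemma hzpow_conj (f h : ℂ ≃ₜ ℂ) (hconj : ∀ z : ℂ, h (f z) = h z + 1) (n : ℤ) (y : ℂ) :
    h (hzpow f n y) = h y + n := by
  cases n with
  | ofNat n =>
    show h (hpow f n y) = h y + ((n : ℤ) : ℂ)
    exact_mod_cast hpow_conj f h hconj n y
  | negSucc k =>
    have h1 : hzpow f (Int.negSucc k) y = (hpow f (k + 1)).symm y := rfl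
    have h2 := hpow_conj f h hconj (k + 1) ((hpow f (k + 1)).symm y)
    rw [Homeomorph.apply_symm_apply] at h2
    rw [h1]
    have : h ((hpow f (k+1)).symm y) = h y - (k+1 : ℕ) := by
      rw [h2]; ring
    rw [this]
    push_cast [Int.negSucc_eq]
    ring

/-- An orientation preserving homeomorphism of the plane which is topologically conjugate
to the translation `z ↦ z + 1` does not have the topological shadowing property. -/
theorem conjugate_to_translation_not_TSP (f : ℂ ≃ₜ ℂ)
    (hor : OrientationPreserving f) (h : ℂ ≃ₜ ℂ)
    (hconj : ∀ z : ℂ, h (f z) = h z + 1) : ¬ TSP f := by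
  intro hTSP
  -- the target radius function on the `f`-side
  set r : ℂ → ℝ := fun p => Real.exp (-‖h p‖) with hr_def
  have hrc : Continuous r :=
    Real.continuous_exp.comp (continuous_norm.comp h.continuous).neg
  have hrpos : ∀ p, 0 < r p := fun p => Real.exp_pos _
  obtain ⟨ε, hεc, hεpos, hεmod⟩ := exists_modulus h r hrc hrpos
  obtain ⟨δ, hδc, hδpos, hshadow⟩ := hTSP ε hεc hεpos
  -- choose the size `d` of the single jump
  have hc0 : 0 < δ (h.symm 1) := hδpos _
  have φcont : Continuous fun t : ℝ => dist (h.symm ((1 : ℂ) + t * Complex.I)) (h.symm 1) := by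
    exact (h.symm.continuous.comp (continuous_const.add
      (Complex.continuous_ofReal.mul continuous_const))).dist continuous_const
  obtain ⟨d, hdpos, hdlt⟩ : ∃ d : ℝ, 0 < d ∧
      dist (h.symm ((1 : ℂ) + d * Complex.I)) (h.symm 1) < δ (h.symm 1) := by
    have h0 : dist (h.symm ((1 : ℂ) + (0 : ℝ) * Complex.I)) (h.symm 1) = 0 := by simp
    have htd := φcont.continuousAt (x := 0)
    rw [ContinuousAt, h0] at htd
    have hev : ∀ᶠ t : ℝ in 𝓝 (0 : ℝ),
        dist (h.symm ((1 : ℂ) + (t : ℝ) * Complex.I)) (h.symm 1) < δ (h.symm 1) :=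
      htd.eventually_lt_const hc0
    have hev' := hev.filter_mono (nhdsWithin_le_nhds (s := Set.Ioi (0 : ℝ)))
    obtain ⟨t, ht1, ht2⟩ := (hev'.and (eventually_mem_nhdsWithin)).exists
    exact ⟨t, ht2, ht1⟩
  -- the pseudo-orbit
  set z : ℤ → ℂ := fun n => (n : ℂ) + (if 0 < n then (d : ℂ) * Complex.I else 0) with hz_def
  set x : ℤ → ℂ := fun n => h.symm (z n) with hx_def
  have hfx : ∀ w : ℂ, f w = h.symm (h w + 1) := fun w => by
    rw [← hconj w, Homeomorph.symm_apply_apply]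
  have hhx : ∀ n, h (x n) = z n := fun n => h.apply_symm_apply _
  have hfxn : ∀ n, f (x n) = h.symm (z n + 1) := fun n => by rw [hfx, hhx]
  have hpo : IsPseudoOrbit f δ x := by
    intro n
    rcases lt_trichotomy n 0 with hn | hn | hn
    · have h1 : ¬(0 < n) := by omega
      have h2 : ¬(0 < n + 1) := by omega
      have hzz : z n + 1 = z (n + 1) := by
        simp only [hz_def, h1, h2, if_false]
        push_cast; ring
      rw [hfxn, hzz]
      simpa [hx_def] using hδpos (h.symm (z (n + 1)))
    · subst hn
      have h1 : z (0 : ℤ) + 1 = 1 := by simp [hz_def]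
      have h2 : z (1 : ℤ) = 1 + (d : ℂ) * Complex.I := by simp only [hz_def]; norm_num
      rw [hfxn]
      simp only [hx_def, h1, h2]
      rw [dist_comm] at hdlt
      convert hdlt using 3 <;> norm_num [h2]
    · have h1 : 0 < n := hn
      have h2 : 0 < n + 1 := by omega
      have hzz : z n + 1 = z (n + 1) := by
        simp only [hz_def, h1, h2, if_true]
        push_cast; ring
      rw [hfxn, hzz]
      simpa [hx_def] using hδpos (h.symm (z (n + 1)))
  obtain ⟨y, hy⟩ := hshadow x hpo
  set w : ℂ := h y with hw_def
  have key : ∀ n : ℤ, ‖w + n - z n‖ < Real.exp (-‖z n‖) := by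
    intro n
    have h1 := hεmod (x n) (hzpow f n y) (hy n)
    rw [hzpow_conj f h hconj n y, hhx n] at h1
    simpa [Complex.dist_eq, hr_def, hhx n, ← hw_def] using h1
  -- choose a large natural number M
  obtain ⟨M, hM1, hMexp⟩ : ∃ M : ℕ, 0 < M ∧ Real.exp (-(M : ℝ)) < d / 2 := by
    refine ⟨⌈2 / d⌉₊ + 1, Nat.succ_pos _, ?_⟩
    have h2d : (0 : ℝ) < 2 / d := by positivity
    have hle : (2 / d : ℝ) < (⌈2 / d⌉₊ + 1 : ℕ) := by
      push_cast
      have := Nat.le_ceil (2 / d)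
      linarith
    have hexp : (2 / d : ℝ) < Real.exp ((⌈2 / d⌉₊ + 1 : ℕ) : ℝ) := by
      calc (2 / d : ℝ) < ((⌈2 / d⌉₊ + 1 : ℕ) : ℝ) := hle
        _ < Real.exp _ := by linarith [Real.add_one_le_exp ((⌈2 / d⌉₊ + 1 : ℕ) : ℝ)]
    rw [Real.exp_neg]
    calc (Real.exp ((⌈2 / d⌉₊ + 1 : ℕ) : ℝ))⁻¹ < (2 / d)⁻¹ := by
          exact inv_strictAnti₀ h2d hexp
      _ = d / 2 := by rw [inv_div]
  -- negative side: |w| < exp(-M)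
  have hneg : ‖w‖ < Real.exp (-(M : ℝ)) := by
    have hk := key (-(M : ℤ))
    have hz1 : z (-(M : ℤ)) = -(M : ℂ) := by
      simp only [hz_def]
      have : ¬(0 < -(M : ℤ)) := by omega
      simp [this]
    rw [hz1] at hk
    have habs : ‖-(M : ℂ)‖ = (M : ℝ) := by
      rw [norm_neg]
      exact_mod_cast Complex.norm_natCast M
    rw [habs] at hk
    push_cast at hk
    rwa [show w + -(M : ℂ) - -(M : ℂ) = w from by ring] at hk
  -- positive side: |w - d·I| < exp(-M)
  have hpos : ‖w - (d : ℂ) * Complex.I‖ < Real.exp (-(M : ℝ)) := by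
    have hk := key ((M : ℤ))
    have hz1 : z ((M : ℤ)) = (M : ℂ) + (d : ℂ) * Complex.I := by
      simp only [hz_def]
      have : (0 : ℤ) < (M : ℤ) := by exact_mod_cast hM1
      rw [if_pos this]; simp
    rw [hz1] at hk
    have h2 : w + ((M : ℤ) : ℂ) - ((M : ℂ) + (d : ℂ) * Complex.I)
        = w - (d : ℂ) * Complex.I := by push_cast; ring
    rw [h2] at hk
    have habs : (M : ℝ) ≤ ‖(M : ℂ) + (d : ℂ) * Complex.I‖ := by
      have hre : ((M : ℂ) + (d : ℂ) * Complex.I).re = (M : ℝ) := by simp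
      calc (M : ℝ) = |((M : ℂ) + (d : ℂ) * Complex.I).re| := by
            rw [hre]; exact (abs_of_nonneg (by positivity)).symm
        _ ≤ ‖(M : ℂ) + (d : ℂ) * Complex.I‖ := Complex.abs_re_le_norm _
    calc ‖w - (d : ℂ) * Complex.I‖
        < Real.exp (-(‖(M : ℂ) + (d : ℂ) * Complex.I‖)) := hk
      _ ≤ Real.exp (-(M : ℝ)) := Real.exp_le_exp.mpr (by linarith)
  -- contradiction
  have hd_abs : ‖(d : ℂ) * Complex.I‖ = d := by
    simp [abs_of_pos hdpos]
  have htri : ‖(d : ℂ) * Complex.I‖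
      ≤ ‖w‖ + ‖w - (d : ℂ) * Complex.I‖ := by
    have h1 : (d : ℂ) * Complex.I = w - (w - (d : ℂ) * Complex.I) := by ring
    rw [h1]
    simpa using norm_sub_le w (w - (d : ℂ) * Complex.I)
  rw [hd_abs] at htri
  linarith
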